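/- In the game NimG-RM played on an undirected graph where the weight function is constant equal to 1, the misère-convention game starting at vertex u is identical (has the same game tree and same winner) to the normal-play game of Vertex Geography on the same undirected graph starting at u. Consequently, with all weights 1, (G,u,w) is a misère first-player win in NimG-RM if and only if (G,u) is a normal-play first-player win in undirected Vertex Geography, which holds if and only if every maximum matching of G covers u. -/

import Mathlib

universe u
mutual
  inductive GNormalWin {α : Type u} (moves : α → α → Prop) : α → Prop
    | step {p q : α} : moves p q → GNormalLose moves q → GNormalWin moves p
  inductive GNormalLose {α : Type u} (moves : α → α → Prop) : α → Prop
    | intro {p : α} : (∀ q, moves p q → GNormalWin moves q) → GNormalLose moves p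
end

mutual
  inductive GMisereWin {α : Type u} (moves : α → α → Prop) : α → Prop
    | terminal {p : α} : (∀ q, ¬ moves p q) → GMisereWin moves p
    | step {p q : α} : moves p q → GMisereLose moves q → GMisereWin moves p
  inductive GMisereLose {α : Type u} (moves : α → α → Prop) : α → Prop
    | intro {p q₀ : α} : moves p q₀ → (∀ q, moves p q → GMisereWin moves q) → GMisereLose moves p
end

def nimMove {V : Type u} (adj : V → V → Prop) (p q : V × (V → ℕ)) : Prop :=
  adj p.1 q.1 ∧ q.2 p.1 < p.2 p.1 ∧ ∀ v, v ≠ p.1 → q.2 v = p.2 v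

mutual
  inductive NimRMWin {V : Type u} (adj : V → V → Prop) : V × (V → ℕ) → Prop
    | zero {p} : p.2 p.1 = 0 → NimRMWin adj p
    | step {p q} : nimMove adj p q → NimRMLose adj q → NimRMWin adj p
  inductive NimRMLose {V : Type u} (adj : V → V → Prop) : V × (V → ℕ) → Prop
    | intro {p} : p.2 p.1 ≠ 0 → (∀ q, nimMove adj p q → NimRMWin adj q) → NimRMLose adj p
end

def vgMove {V : Type u} (A : V → V → Prop) (p q : Set V × V) : Prop :=
  A p.2 q.2 ∧ q.2 ∈ p.1 ∧ q.2 ≠ p.2 ∧ q.1 = p.1 \ {p.2}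

def addOut {V : Type u} (A : V → V → Prop) : V ⊕ V → V ⊕ V → Prop
  | .inl a, .inl b => A a b
  | .inl a, .inr b => a = b
  | _, _ => False

def MaxMatching {V : Type u} (G : SimpleGraph V) (M : G.Subgraph) : Prop :=
  M.IsMatching ∧ ∀ N : G.Subgraph, N.IsMatching → N.edgeSet.ncard ≤ M.edgeSet.ncard

section Aux
open SimpleGraph
open scoped Classical

variable {V : Type} [Fintype V] (G : SimpleGraph V)

/-- Matchings whose vertices lie in `S`. -/
def MMS (S : Set V) (M : G.Subgraph) : Prop := M.IsMatching ∧ M.verts ⊆ S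

/-- Maximum matchings within `S`. -/
def MaxMMS (S : Set V) (M : G.Subgraph) : Prop :=
  MMS G S M ∧ ∀ N, MMS G S N → N.edgeSet.ncard ≤ M.edgeSet.ncard

lemma exists_maxMMS (S : Set V) : ∃ M, MaxMMS G S M := by
  set T : Set ℕ := {n | ∃ M : G.Subgraph, MMS G S M ∧ M.edgeSet.ncard = n} with hT
  have hne : T.Nonempty :=
    ⟨(⊥ : G.Subgraph).edgeSet.ncard, ⊥, ⟨fun v hv => by simp at hv, by simp⟩, rfl⟩
  have hbdd : BddAbove T := by
    refine ⟨G.edgeSet.ncard, ?_⟩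
    rintro n ⟨M, hM, rfl⟩
    exact Set.ncard_le_ncard (SimpleGraph.Subgraph.edgeSet_subset M) (Set.toFinite _)
  obtain ⟨M, hM, hMn⟩ := Nat.sSup_mem hne hbdd
  refine ⟨M, hM, fun N hN => ?_⟩
  rw [hMn]
  exact le_csSup hbdd ⟨N, hN, rfl⟩

lemma matching_delete {M : G.Subgraph} (hM : M.IsMatching) {v w : V} (hvw : M.Adj v w) :
    ∃ M' : G.Subgraph, M'.IsMatching ∧ M'.verts = M.verts \ {v, w} ∧
      M'.edgeSet = M.edgeSet \ {s(v, w)} := by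
  have hpartner : ∀ {a b y : V}, M.Adj a b → M.Adj a y → y = b := by
    intro a b y hab hay
    exact (hM (M.edge_vert hab)).unique hay hab
  refine ⟨{ verts := M.verts \ {v, w},
            Adj := fun a b => M.Adj a b ∧ a ≠ v ∧ a ≠ w ∧ b ≠ v ∧ b ≠ w,
            adj_sub := fun h => M.adj_sub h.1,
            edge_vert := fun {a b} h => ⟨M.edge_vert h.1, by simp [h.2.1, h.2.2.1]⟩,
            symm := ⟨fun a b h => ⟨M.adj_symm h.1, h.2.2.2.1, h.2.2.2.2, h.2.1, h.2.2.1⟩⟩ }, ?_, rfl, ?_⟩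
  · intro a ha
    obtain ⟨haM, ha2⟩ := ha
    simp only [Set.mem_insert_iff, Set.mem_singleton_iff, not_or] at ha2
    obtain ⟨hav, haw⟩ := ha2
    obtain ⟨b, hb, hbu⟩ := hM haM
    have hbv : b ≠ v := by
      intro h; subst h
      exact haw (hpartner hvw (M.adj_symm hb))
    have hbw : b ≠ w := by
      intro h; subst h
      exact hav (hpartner (M.adj_symm hvw) (M.adj_symm hb))
    exact ⟨b, ⟨hb, hav, haw, hbv, hbw⟩, fun y hy => hbu y hy.1⟩
  · ext e
    induction e using Sym2.ind with
    | _ a b =>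
      simp only [SimpleGraph.Subgraph.mem_edgeSet, Set.mem_diff, Set.mem_singleton_iff]
      constructor
      · rintro ⟨hab, hav, haw, hbv, hbw⟩
        refine ⟨hab, fun heq => ?_⟩
        rcases Sym2.eq_iff.mp heq with ⟨h1, h2⟩ | ⟨h1, h2⟩
        · exact hav h1
        · exact haw h1
      · rintro ⟨hab, hne⟩
        refine ⟨hab, ?_, ?_, ?_, ?_⟩
        · intro h; subst h
          exact hne (by rw [hpartner hvw hab])
        · intro h; subst h
          have : b = v := hpartner (M.adj_symm hvw) hab
          subst this
          exact hne (Sym2.eq_iff.mpr (Or.inr ⟨rfl, rfl⟩))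
        · intro h; subst h
          have : a = w := hpartner hvw (M.adj_symm hab)
          subst this
          exact hne (Sym2.eq_swap)
        · intro h; subst h
          have : a = v := hpartner (M.adj_symm hvw) (M.adj_symm hab)
          subst this
          exact hne rfl

lemma combo {S : Set V} {v : V} (hv : v ∈ S) :
    (∀ M, MaxMMS G S M → v ∈ M.verts) ↔
    ∃ w, G.Adj v w ∧ w ∈ S ∧ ∃ N, MaxMMS G (S \ {v}) N ∧ w ∉ N.verts := by
  constructor
  · intro h
    obtain ⟨M, hMmax⟩ := exists_maxMMS G S
    have hvM := h M hMmax
    obtain ⟨w, hw, -⟩ := hMmax.1.1 hvM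
    have hGvw : G.Adj v w := M.adj_sub hw
    have hwS : w ∈ S := hMmax.1.2 (M.edge_vert (M.adj_symm hw))
    obtain ⟨M', hM'match, hM'verts, hM'edge⟩ := matching_delete G hMmax.1.1 hw
    have hmem : s(v, w) ∈ M.edgeSet := hw
    have hcard : M'.edgeSet.ncard = M.edgeSet.ncard - 1 := by
      rw [hM'edge]; exact Set.ncard_diff_singleton_of_mem hmem
    have hpos : 0 < M.edgeSet.ncard := (Set.ncard_pos (Set.toFinite _)).mpr ⟨_, hmem⟩
    refine ⟨w, hGvw, hwS, ⟨M', ⟨⟨hM'match, ?_⟩, ?_⟩, ?_⟩⟩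
    · rw [hM'verts]
      intro x hx
      refine ⟨hMmax.1.2 hx.1, fun hxv => hx.2 ?_⟩
      simp only [Set.mem_singleton_iff] at hxv
      simp [hxv]
    · intro N hN
      by_contra hlt
      push_neg at hlt
      have hNM : M.edgeSet.ncard ≤ N.edgeSet.ncard := by omega
      have hNmax : MaxMMS G S N :=
        ⟨⟨hN.1, hN.2.trans Set.diff_subset⟩, fun K hK => le_trans (hMmax.2 K hK) hNM⟩
      exact (hN.2 (h N hNmax)).2 rfl
    · rw [hM'verts]
      intro hx
      exact hx.2 (by simp)
  · rintro ⟨w, hGvw, hwS, N, hNmax, hwN⟩ M hMmax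
    by_contra hvM
    have hMsub : M.verts ⊆ S \ {v} := by
      intro x hx
      refine ⟨hMmax.1.2 hx, fun hxv => ?_⟩
      simp only [Set.mem_singleton_iff] at hxv
      exact hvM (hxv ▸ hx)
    have h1 : M.edgeSet.ncard ≤ N.edgeSet.ncard := hNmax.2 M ⟨hMmax.1.1, hMsub⟩
    have hvN : v ∉ N.verts := fun h => (hNmax.1.2 h).2 rfl
    have hdisj : Disjoint N.support (G.subgraphOfAdj hGvw).support := by
      rw [hNmax.1.1.support_eq_verts]
      refine Set.disjoint_left.mpr fun x hx hx2 => ?_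
      have := (G.subgraphOfAdj hGvw).support_subset_verts hx2
      simp only [SimpleGraph.subgraphOfAdj_verts, Set.mem_insert_iff,
        Set.mem_singleton_iff] at this
      rcases this with rfl | rfl
      · exact hvN hx
      · exact hwN hx
    have hKmatch : (N ⊔ G.subgraphOfAdj hGvw).IsMatching :=
      hNmax.1.1.sup (SimpleGraph.Subgraph.IsMatching.subgraphOfAdj hGvw) hdisj
    have hKsub : (N ⊔ G.subgraphOfAdj hGvw).verts ⊆ S := by
      rw [SimpleGraph.Subgraph.verts_sup, SimpleGraph.subgraphOfAdj_verts]
      intro x hx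
      rcases hx with hx | hx
      · exact (hNmax.1.2 hx).1
      · rcases hx with rfl | hx
        · exact hv
        · simp only [Set.mem_singleton_iff] at hx
          exact hx ▸ hwS
    have hsvw : s(v, w) ∉ N.edgeSet := fun h => hvN (N.edge_vert h)
    have hKcard : (N ⊔ G.subgraphOfAdj hGvw).edgeSet.ncard = N.edgeSet.ncard + 1 := by
      rw [SimpleGraph.Subgraph.edgeSet_sup, SimpleGraph.edgeSet_subgraphOfAdj,
        Set.union_singleton, Set.ncard_insert_of_notMem hsvw (Set.toFinite _)]
    have h2 := hMmax.2 _ ⟨hKmatch, hKsub⟩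
    omega
end Aux

section Game
open SimpleGraph
open scoped Classical

variable {V : Type} [Fintype V] (G : SimpleGraph V)

lemma vg_det : ∀ (n : ℕ) (S : Set V) (v : V), S.ncard = n → v ∈ S →
    GNormalWin (vgMove G.Adj) (S, v) ∨ GNormalLose (vgMove G.Adj) (S, v) := by
  intro n
  induction n using Nat.strong_induction_on with
  | _ n IH =>
    intro S v hn hv
    by_cases h : ∃ q, vgMove G.Adj (S, v) q ∧ GNormalLose (vgMove G.Adj) q
    · obtain ⟨q, hq, hl⟩ := h
      exact Or.inl (.step hq hl)
    · refine Or.inr (.intro fun q hq => ?_)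
      obtain ⟨T, w⟩ := q
      obtain ⟨hadj, hwS, hwv, hT⟩ := hq
      subst hT
      have hlt : (S \ {v}).ncard < n := by
        rw [← hn]; exact Set.ncard_diff_singleton_lt_of_mem hv (Set.toFinite _)
      rcases IH _ hlt _ w rfl ⟨hwS, hwv⟩ with hW | hL
      · exact hW
      · exact absurd ⟨(S \ {v}, w), ⟨hadj, hwS, hwv, rfl⟩, hL⟩ h

lemma vg_excl : ∀ (n : ℕ) (S : Set V) (v : V), S.ncard = n → v ∈ S →
    GNormalWin (vgMove G.Adj) (S, v) → GNormalLose (vgMove G.Adj) (S, v) → False := by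
  intro n
  induction n using Nat.strong_induction_on with
  | _ n IH =>
    intro S v hn hv hW hL
    cases hW with
    | step hmv hl =>
      rename_i q
      cases hL with
      | intro hall =>
        have hw := hall q hmv
        obtain ⟨T, w⟩ := q
        obtain ⟨hadj, hwS, hwv, hT⟩ := hmv
        subst hT
        have hlt : (S \ {v}).ncard < n := by
          rw [← hn]; exact Set.ncard_diff_singleton_lt_of_mem hv (Set.toFinite _)
        exact IH _ hlt _ w rfl ⟨hwS, hwv⟩ hw hl

lemma vg_match : ∀ (n : ℕ) (S : Set V) (v : V), S.ncard = n → v ∈ S →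
    (GNormalWin (vgMove G.Adj) (S, v) ↔ ∀ M, MaxMMS G S M → v ∈ M.verts) := by
  intro n
  induction n using Nat.strong_induction_on with
  | _ n IH =>
    intro S v hn hv
    have hlt : (S \ {v}).ncard < n := by
      rw [← hn]; exact Set.ncard_diff_singleton_lt_of_mem hv (Set.toFinite _)
    rw [combo G hv]
    constructor
    · intro hW
      cases hW with
      | step hmv hl =>
        rename_i q
        obtain ⟨T, w⟩ := q
        obtain ⟨hadj, hwS, hwv, hT⟩ := hmv
        subst hT
        have hwS' : w ∈ S \ {v} := ⟨hwS, hwv⟩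
        have hnW : ¬ GNormalWin (vgMove G.Adj) (S \ {v}, w) :=
          fun hW' => vg_excl G _ _ _ rfl hwS' hW' hl
        have hnall : ¬ ∀ M, MaxMMS G (S \ {v}) M → w ∈ M.verts :=
          fun hall => hnW ((IH _ hlt _ w rfl hwS').mpr hall)
        push_neg at hnall
        exact ⟨w, hadj, hwS, hnall⟩
    · rintro ⟨w, hadj, hwS, N, hNmax, hwN⟩
      have hwv : w ≠ v := hadj.ne'
      have hwS' : w ∈ S \ {v} := ⟨hwS, hwv⟩
      have hnW : ¬ GNormalWin (vgMove G.Adj) (S \ {v}, w) := fun hW =>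
        hwN ((IH _ hlt _ w rfl hwS').mp hW N hNmax)
      have hL : GNormalLose (vgMove G.Adj) (S \ {v}, w) :=
        (vg_det G _ _ _ rfl hwS').resolve_left hnW
      exact .step ⟨hadj, hwS, hwv, rfl⟩ hL

/-- All-ones-on-`S` weight function. -/
noncomputable def indS (S : Set V) : V → ℕ := fun x => if x ∈ S then 1 else 0

lemma indS_diff {S : Set V} {v : V} (hv : v ∈ S) {f : V → ℕ}
    (h0 : f v = 0) (h1 : ∀ x, x ≠ v → f x = indS S x) : f = indS (S \ {v}) := by
  funext x
  by_cases hx : x = v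
  · subst hx
    simp [indS, h0]
  · rw [h1 x hx]
    simp only [indS, Set.mem_diff, Set.mem_singleton_iff]
    by_cases hxS : x ∈ S <;> simp [hxS, hx]

lemma nim_move {S : Set V} {v w : V} (hv : v ∈ S) (hadj : G.Adj v w) :
    nimMove G.Adj (v, indS S) (w, indS (S \ {v})) := by
  refine ⟨hadj, ?_, ?_⟩
  · show indS (S \ {v}) v < indS S v
    simp [indS, hv]
  · intro x hx
    show indS (S \ {v}) x = indS S x
    simp only [indS, Set.mem_diff, Set.mem_singleton_iff]
    by_cases hxS : x ∈ S <;> simp [hxS, hx]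

lemma nim_vg : ∀ (n : ℕ) (S : Set V) (v : V), S.ncard = n → v ∈ S →
    ((GNormalWin (vgMove G.Adj) (S, v) → NimRMWin G.Adj (v, indS S)) ∧
     (GNormalLose (vgMove G.Adj) (S, v) → NimRMLose G.Adj (v, indS S)) ∧
     (NimRMWin G.Adj (v, indS S) → GNormalWin (vgMove G.Adj) (S, v)) ∧
     (NimRMLose G.Adj (v, indS S) → GNormalLose (vgMove G.Adj) (S, v))) := by
  intro n
  induction n using Nat.strong_induction_on with
  | _ n IH =>
    intro S v hn hv
    have hlt : (S \ {v}).ncard < n := by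
      rw [← hn]; exact Set.ncard_diff_singleton_lt_of_mem hv (Set.toFinite _)
    refine ⟨?_, ?_, ?_, ?_⟩
    · intro hW
      cases hW with
      | step hmv hl =>
        rename_i q
        obtain ⟨T, w⟩ := q
        obtain ⟨hadj, hwS, hwv, hT⟩ := hmv
        subst hT
        exact NimRMWin.step (nim_move G hv hadj)
          ((IH _ hlt _ w rfl ⟨hwS, hwv⟩).2.1 hl)
    · intro hL
      cases hL with
      | intro hall =>
        refine NimRMLose.intro ?_ ?_
        · show indS S v ≠ 0
          simp [indS, hv]
        · rintro ⟨w, f⟩ ⟨hadj, hfv, hfeq⟩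
          have h1 : indS S v = 1 := by simp [indS, hv]
          have hfv0 : f v = 0 := by
            have h2 : f v < indS S v := hfv
            omega
          have hf : f = indS (S \ {v}) := indS_diff hv hfv0 (fun x hx => hfeq x hx)
          subst hf
          have hadj' : G.Adj v w := hadj
          by_cases hw : w ∈ S
          · have hwv : w ≠ v := hadj'.ne'
            have hWq : GNormalWin (vgMove G.Adj) (S \ {v}, w) :=
              hall (S \ {v}, w) ⟨hadj', hw, hwv, rfl⟩
            exact (IH _ hlt _ w rfl ⟨hw, hwv⟩).1 hWq
          · refine NimRMWin.zero ?_
            show indS (S \ {v}) w = 0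
            simp [indS, hw]
    · intro hN
      cases hN with
      | zero h0 =>
        exfalso
        have h1 : indS S v = 0 := h0
        simp [indS, hv] at h1
      | step hmv hl =>
        rename_i q
        obtain ⟨w, f⟩ := q
        obtain ⟨hadj, hfv, hfeq⟩ := hmv
        have h1 : indS S v = 1 := by simp [indS, hv]
        have hfv0 : f v = 0 := by
          have h2 : f v < indS S v := hfv
          omega
        have hf : f = indS (S \ {v}) := indS_diff hv hfv0 (fun x hx => hfeq x hx)
        subst hf
        have hadj' : G.Adj v w := hadj
        have hw' : w ∈ S \ {v} := by
          cases hl with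
          | intro h0 h2 =>
            have h3 : indS (S \ {v}) w ≠ 0 := h0
            by_contra hw
            simp [indS, hw] at h3
        exact GNormalWin.step (q := (S \ {v}, w)) ⟨hadj', hw'.1, hadj'.ne', rfl⟩
          ((IH _ hlt _ w rfl hw').2.2.2 hl)
    · intro hN
      cases hN with
      | intro h0 hall =>
        refine GNormalLose.intro ?_
        rintro ⟨T, w⟩ ⟨hadj, hwS, hwv, hT⟩
        subst hT
        have hWn : NimRMWin G.Adj (w, indS (S \ {v})) :=
          hall (w, indS (S \ {v})) (nim_move G hv hadj)
        exact (IH _ hlt _ w rfl ⟨hwS, hwv⟩).2.2.1 hWn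
end Game

/-- With all weights equal to 1, misère NimG-RM coincides with normal-play undirected
Vertex Geography: the misère NimG-RM position is a first-player win iff the normal
Vertex Geography position is, iff every maximum matching covers `u`. -/
theorem stmt1 {V : Type} [Fintype V] (G : SimpleGraph V) (u : V) :
    (NimRMWin G.Adj (u, fun _ => 1) ↔ GNormalWin (vgMove G.Adj) (Set.univ, u)) ∧
    (NimRMWin G.Adj (u, fun _ => 1) ↔
      ∀ M : G.Subgraph, MaxMatching G M → u ∈ M.verts) := by
  classical
  have huniv : (fun _ : V => (1 : ℕ)) = indS (Set.univ : Set V) := by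
    funext x; simp [indS]
  have hu : u ∈ (Set.univ : Set V) := Set.mem_univ u
  have h4 := nim_vg G (Set.univ : Set V).ncard Set.univ u rfl hu
  have hmatch := vg_match G (Set.univ : Set V).ncard Set.univ u rfl hu
  rw [huniv]
  refine ⟨⟨h4.2.2.1, h4.1⟩, ?_⟩
  constructor
  · intro hN M hM
    exact hmatch.mp (h4.2.2.1 hN) M ⟨⟨hM.1, Set.subset_univ _⟩, fun N hN' => hM.2 N hN'.1⟩
  · intro hall
    exact h4.1 (hmatch.mpr fun M hM =>
      hall M ⟨hM.1.1, fun N hN => hM.2 N ⟨hN, Set.subset_univ _⟩⟩)
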